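/- Let $s, t, p, n$ be integers and $n_1 \geq n_2 \geq \cdots \geq n_t \geq p \geq 1$ be integers with $\sum_{i=1}^{t} n_i = n - s$. If $n_1 < n - s - p(t-1)$, then $e(K_s \vee (K_{n_1} \cup K_{n_2} \cup \cdots \cup K_{n_t})) < e(K_s \vee (K_{n-s-p(t-1)} \cup (t-1)K_p))$. -/

import Mathlib

open SimpleGraph Finset

/-- The number of edges of a simple graph. -/
noncomputable def eCard {V : Type*} (G : SimpleGraph V) : ℕ := Nat.card G.edgeSet

/-- The number of connected components of `G - S`, the subgraph of `G` induced on the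
complement of `S`. -/
noncomputable def numCompDel {V : Type*} (G : SimpleGraph V) (S : Set V) : ℕ :=
  Nat.card (G.induce Sᶜ).ConnectedComponent

/-- `G` has the `k`-strong parity property: for every vertex subset `X` of even size, `G`
contains a spanning subgraph `F` whose degrees are odd on `X` and even and at least `k`
outside `X`. -/
def KStrongParity {V : Type*} [Fintype V] (k : ℕ) (G : SimpleGraph V) : Prop :=
  ∀ X : Finset V, Even X.card → ∃ F : SimpleGraph V, F ≤ G ∧
    (∀ u ∈ X, Odd (Nat.card (F.neighborSet u))) ∧
    (∀ v, v ∉ X → Even (Nat.card (F.neighborSet v)) ∧ k ≤ Nat.card (F.neighborSet v))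

/-- The join `K_s ∨ (K_{n 0} ∪ K_{n 1} ∪ ⋯ ∪ K_{n (t-1)})` of a complete graph `K_s` with a
disjoint union of complete graphs of sizes `n 0, …, n (t-1)`. -/
def GJoin (s : ℕ) {t : ℕ} (n : Fin t → ℕ) :
    SimpleGraph (Fin s ⊕ Σ i : Fin t, Fin (n i)) where
  Adj u v := u ≠ v ∧ (u.isLeft ∨ v.isLeft ∨
    ∃ i : Fin t, (∃ a, u = Sum.inr ⟨i, a⟩) ∧ (∃ b, v = Sum.inr ⟨i, b⟩))
  symm := by
    constructor
    rintro u v ⟨h1, h2⟩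
    refine ⟨h1.symm, ?_⟩
    rcases h2 with h | h | ⟨i, ha, hb⟩
    · exact Or.inr (Or.inl h)
    · exact Or.inl h
    · exact Or.inr (Or.inr ⟨i, hb, ha⟩)
  loopless := by constructor; rintro u ⟨h, -⟩; exact h rfl

/-- The graph `K_s ∨ (K_a ∪ m K_p)`. -/
def KJmix (s a m p : ℕ) :
    SimpleGraph (Fin s ⊕ Σ i : Fin (m + 1), Fin ((Fin.cons a (fun _ => p) : Fin (m+1) → ℕ) i)) :=
  GJoin s (Fin.cons a (fun _ => p) : Fin (m+1) → ℕ)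

/-- The signless Laplacian spectral radius of `G`: the largest eigenvalue of
`Q(G) = D(G) + A(G)`. -/
noncomputable def qSpec {V : Type*} [Fintype V] [DecidableEq V] (G : SimpleGraph V)
    [DecidableRel G.Adj] : ℝ :=
  sSup {x : ℝ | Module.End.HasEigenvalue
    (Matrix.toLin' (Matrix.diagonal (fun v => (G.degree v : ℝ)) + G.adjMatrix ℝ)) x}

section Aux
variable (s : ℕ) {t : ℕ} (nseq : Fin t → ℕ)

lemma ecc_gjoin_adj (u v : Fin s ⊕ Σ i : Fin t, Fin (nseq i)) :
    (GJoin s nseq).Adj u v ↔ u ≠ v ∧ (u.isLeft ∨ v.isLeft ∨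
    ∃ i : Fin t, (∃ a, u = Sum.inr ⟨i, a⟩) ∧ (∃ b, v = Sum.inr ⟨i, b⟩)) := Iff.rfl

noncomputable instance : DecidableRel (GJoin s nseq).Adj := Classical.decRel _

lemma ecc_deg_inl (u : Fin s) :
    (GJoin s nseq).degree (Sum.inl u) = s + ∑ i, nseq i - 1 := by
  have h : (GJoin s nseq).neighborFinset (Sum.inl u) = univ.erase (Sum.inl u) := by
    ext w
    rw [mem_neighborFinset, ecc_gjoin_adj, mem_erase]
    constructor
    · rintro ⟨h, -⟩
      exact ⟨fun h' => h h'.symm, mem_univ _⟩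
    · rintro ⟨h, -⟩
      exact ⟨fun h' => h h'.symm, Or.inl rfl⟩
  rw [SimpleGraph.degree, h, card_erase_of_mem (mem_univ _), card_univ]
  simp [Fintype.card_sum, Fintype.card_sigma]

lemma ecc_deg_inr (i : Fin t) (a : Fin (nseq i)) :
    (GJoin s nseq).degree (Sum.inr ⟨i, a⟩) = s + nseq i - 1 := by
  rw [SimpleGraph.degree, neighborFinset_eq_filter]
  rw [Finset.card_filter]
  rw [Fintype.sum_sum_type]
  have h1 : ∀ w : Fin s, (GJoin s nseq).Adj (Sum.inr ⟨i,a⟩) (Sum.inl w) := by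
    intro w; exact ⟨by simp, Or.inr (Or.inl rfl)⟩
  have h2 : ∀ x : Σ j : Fin t, Fin (nseq j),
      (GJoin s nseq).Adj (Sum.inr ⟨i,a⟩) (Sum.inr x) ↔ x.1 = i ∧ x ≠ ⟨i,a⟩ := by
    rintro ⟨j, b⟩
    rw [ecc_gjoin_adj]
    constructor
    · rintro ⟨hne, h⟩
      rcases h with h | h | ⟨k, ⟨c, hc⟩, ⟨d, hd⟩⟩
      · simp at h
      · simp at h
      · cases hc; cases hd
        refine ⟨rfl, fun h => hne (by rw [h])⟩
    · rintro ⟨rfl, hne⟩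
      exact ⟨fun h => hne (by injection h with h; exact h.symm ▸ rfl),
        Or.inr (Or.inr ⟨j, ⟨a, rfl⟩, ⟨b, rfl⟩⟩)⟩
  have e1 : (∑ w : Fin s, if (GJoin s nseq).Adj (Sum.inr ⟨i, a⟩) (Sum.inl w) then 1 else 0 : ℕ)
      = s := by
    simp [h1]
  have e2 : (∑ x : (j : Fin t) × Fin (nseq j),
      if (GJoin s nseq).Adj (Sum.inr ⟨i, a⟩) (Sum.inr x) then 1 else 0 : ℕ) = nseq i - 1 := by
    simp only [h2]
    rw [← Finset.univ_sigma_univ, Finset.sum_sigma]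
    rw [Finset.sum_eq_single i]
    · have : ∀ b : Fin (nseq i), ((⟨i, b⟩ : Σ j, Fin (nseq j)) ≠ ⟨i, a⟩) ↔ b ≠ a := by
        intro b
        simp [Sigma.ext_iff]
      simp only [this, eq_self_iff_true, true_and]
      rw [← Finset.card_filter]
      have : (univ.filter (fun b : Fin (nseq i) => b ≠ a)) = univ.erase a := Finset.filter_ne' _ _
      rw [this, card_erase_of_mem (mem_univ _), card_univ, Fintype.card_fin]
    · intro j _ hj
      simp [hj]
    · intro h; exact absurd (mem_univ i) h
  rw [e1, e2]
  have := a.2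
  omega

lemma ecc_twice : 2 * eCard (GJoin s nseq)
    = s * (s + ∑ i, nseq i - 1) + ∑ i, nseq i * (s + nseq i - 1) := by
  have : eCard (GJoin s nseq) = (GJoin s nseq).edgeFinset.card := by
    rw [eCard, SimpleGraph.edgeFinset_card, Nat.card_eq_fintype_card]
  rw [this, ← sum_degrees_eq_twice_card_edges, Fintype.sum_sum_type]
  congr 1
  · simp [ecc_deg_inl]
  · rw [← Finset.univ_sigma_univ, Finset.sum_sigma]
    refine Finset.sum_congr rfl fun i _ => ?_
    simp [ecc_deg_inr]
end Aux


/-- **Lemma 2.1 (Zheng–Li–Luo–Wang).** If `n₁ ≥ n₂ ≥ ⋯ ≥ n_t ≥ p ≥ 1`, `∑ nᵢ = n - s` and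
`n₁ < n - s - p(t-1)`, then
`e(K_s ∨ (K_{n₁} ∪ ⋯ ∪ K_{n_t})) < e(K_s ∨ (K_{n-s-p(t-1)} ∪ (t-1)K_p))`. -/
theorem edge_count_compression (s p n t : ℕ) (ht : 1 ≤ t) (nseq : Fin t → ℕ)
    (hmono : ∀ i j : Fin t, i ≤ j → nseq j ≤ nseq i)
    (hp : ∀ i, p ≤ nseq i) (hp1 : 1 ≤ p)
    (hsum : ∑ i, (nseq i : ℤ) = (n : ℤ) - s)
    (h1 : (nseq ⟨0, ht⟩ : ℤ) < (n : ℤ) - s - p * ((t : ℤ) - 1)) :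
    eCard (GJoin s nseq) < eCard (KJmix s (n - s - p * (t - 1)) (t - 1) p) := by
  have hq : ((p * (t-1) : ℕ) : ℤ) = (p:ℤ) * ((t:ℤ) - 1) := by
    push_cast [Nat.cast_sub ht]
    ring
  rw [← hq] at h1
  have hn0p : (p:ℤ) ≤ (nseq ⟨0, ht⟩ : ℤ) := by exact_mod_cast hp _
  have hp1' : (1:ℤ) ≤ (p:ℤ) := by exact_mod_cast hp1
  have ht' : (1:ℤ) ≤ (t:ℤ) := by exact_mod_cast ht
  set A := n - s - p * (t-1) with hAdef
  have hA : (A:ℤ) = (n:ℤ) - (s:ℤ) - ((p * (t-1) : ℕ):ℤ) := by omega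
  have hA1 : 1 ≤ A := by omega
  have hMZ : ((∑ i, nseq i : ℕ) : ℤ) = (n:ℤ) - s := by push_cast; exact hsum
  have hq2 : ((t-1) * p : ℕ) = p * (t-1) := Nat.mul_comm _ _
  have hMnat : ∑ i, nseq i = A + (t-1) * p := by omega
  -- edge count formulas
  have e1 := ecc_twice s nseq
  have e2 : 2 * eCard (KJmix s A (t-1) p)
      = s * (s + (A + (t-1) * p) - 1) + (A * (s + A - 1) + (t-1) * (p * (s + p - 1))) := by
    rw [show KJmix s A (t-1) p = GJoin s (Fin.cons A fun _ => p) from rfl, ecc_twice]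
    congr 2
    · congr 1
      simp [Fin.sum_univ_succ, Nat.mul_comm]
    · simp [Fin.sum_univ_succ, Nat.mul_comm]
  rw [hMnat] at e1
  -- key integer inequality
  have hZ : ∑ i, (nseq i : ℤ) * ((s:ℤ) + nseq i - 1)
      < (A:ℤ) * ((s:ℤ) + A - 1) + ((t:ℤ) - 1) * ((p:ℤ) * ((s:ℤ) + p - 1)) := by
    have hb : ∀ i, (nseq i : ℤ) ≤ (nseq ⟨0, ht⟩ : ℤ) := by
      intro i
      exact_mod_cast hmono ⟨0, ht⟩ i (by simp [Fin.le_def])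
    have hpi : ∀ i, (p:ℤ) ≤ (nseq i : ℤ) := fun i => by exact_mod_cast hp i
    set n0 : ℤ := (nseq ⟨0, ht⟩ : ℤ) with hn0def
    have step : ∑ i, ((nseq i : ℤ)^2 - (p:ℤ)^2) ≤ ∑ i, ((nseq i : ℤ) - p) * (n0 + p) :=
      Finset.sum_le_sum fun i _ => by nlinarith [hpi i, hb i]
    have e3 : ∑ i, ((nseq i : ℤ)^2 - (p:ℤ)^2) = ∑ i, (nseq i : ℤ)^2 - (t:ℤ) * (p:ℤ)^2 := by
      rw [Finset.sum_sub_distrib, Finset.sum_const, Finset.card_univ, Fintype.card_fin]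
      ring
    have e4 : ∑ i, ((nseq i : ℤ) - p) * (n0 + p)
        = (((n:ℤ) - s) - (t:ℤ) * p) * (n0 + p) := by
      rw [← Finset.sum_mul, Finset.sum_sub_distrib, hsum, Finset.sum_const, Finset.card_univ,
        Fintype.card_fin]
      ring_nf
    have hsq : ∑ i, (nseq i : ℤ)^2 ≤ (t:ℤ) * (p:ℤ)^2 + (((n:ℤ) - s) - (t:ℤ) * p) * (n0 + p) := by
      rw [e3, e4] at step
      linarith
    have e5 : ∑ i, (nseq i : ℤ) * ((s:ℤ) + nseq i - 1)
        = ((s:ℤ) - 1) * ((n:ℤ) - s) + ∑ i, (nseq i : ℤ)^2 := by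
      rw [show ∑ i, (nseq i : ℤ) * ((s:ℤ) + nseq i - 1)
          = ∑ i, (((s:ℤ) - 1) * (nseq i : ℤ) + (nseq i : ℤ)^2) from
        Finset.sum_congr rfl fun i _ => by ring]
      rw [Finset.sum_add_distrib, ← Finset.mul_sum, hsum]
    have haZ : (A:ℤ) = (n:ℤ) - s - (p:ℤ) * ((t:ℤ) - 1) := by rw [hA, hq]
    have hn0a : n0 ≤ (A:ℤ) - 1 := by omega
    have hprod : 0 < ((A:ℤ) - p) * ((A:ℤ) - n0) := by
      apply mul_pos <;> omega
    have hid : (A:ℤ) * ((s:ℤ) + A - 1) + ((t:ℤ) - 1) * ((p:ℤ) * ((s:ℤ) + p - 1))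
        = ((s:ℤ) - 1) * ((n:ℤ) - s) + (t:ℤ) * (p:ℤ)^2 + (((n:ℤ) - s) - (t:ℤ) * p) * (n0 + p)
          + ((A:ℤ) - p) * ((A:ℤ) - n0) := by
      rw [haZ]
      ring
    rw [e5, hid]
    linarith [hsq, hprod]
  -- transfer back to ℕ
  have hcast : ∀ (m k : ℕ), 1 ≤ m → ((m * (k + m - 1) : ℕ) : ℤ) = (m:ℤ) * ((k:ℤ) + m - 1) := by
    intro m k hm
    have h1 : 1 ≤ k + m := by omega
    push_cast [Nat.cast_sub h1]
    ring
  have key : ∑ i, nseq i * (s + nseq i - 1)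
      < A * (s + A - 1) + (t-1) * (p * (s + p - 1)) := by
    have lhs_eq : ((∑ i, nseq i * (s + nseq i - 1) : ℕ) : ℤ)
        = ∑ i, (nseq i : ℤ) * ((s:ℤ) + (nseq i : ℤ) - 1) := by
      rw [Nat.cast_sum]
      exact Finset.sum_congr rfl fun i _ => hcast (nseq i) s (le_trans hp1 (hp i))
    have rhs_eq : ((A * (s + A - 1) + (t-1) * (p * (s + p - 1)) : ℕ) : ℤ)
        = (A:ℤ) * ((s:ℤ) + (A:ℤ) - 1) + ((t:ℤ) - 1) * ((p:ℤ) * ((s:ℤ) + (p:ℤ) - 1)) := by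
      rw [Nat.cast_add, hcast A s hA1, Nat.cast_mul, hcast p s hp1, Nat.cast_sub ht,
        Nat.cast_one]
    have hlt : ((∑ i, nseq i * (s + nseq i - 1) : ℕ) : ℤ)
        < ((A * (s + A - 1) + (t-1) * (p * (s + p - 1)) : ℕ) : ℤ) := by
      rw [lhs_eq, rhs_eq]; exact hZ
    rwa [Nat.cast_lt] at hlt
  omega
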